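/- Let Σ be an m×m positive definite matrix with eigenvalues σ_1 ≥ ... ≥ σ_m > 0, let τ > 0, and let γ = (m-1)·σ_m·τ²/(σ_m·m² + τ²). Then tr(Σ²(Σ + γI_m)^{-1}) - tr(Σ²(Σ + (τ²/m)I_m)^{-1}) ≤ min{σ_1/(m·σ_m), 1} · tr((Σ^{-1} + (m/τ²)I_m)^{-1}). -/

import Mathlib

open Matrix Finset

private lemma myconj_mul {m : ℕ} (V A B : Matrix (Fin m) (Fin m) ℝ) (hV2 : star V * V = 1) :
    (V * A * star V) * (V * B * star V) = V * (A * B) * star V := by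
  have h : star V * (V * (B * star V)) = B * star V := by rw [← mul_assoc, hV2, one_mul]
  simp only [mul_assoc, h]

private lemma myconj_inv {m : ℕ} (V A : Matrix (Fin m) (Fin m) ℝ) (hA : IsUnit A.det)
    (hV1 : V * star V = 1) (hV2 : star V * V = 1) :
    (V * A * star V)⁻¹ = V * A⁻¹ * star V := by
  apply Matrix.inv_eq_right_inv
  rw [myconj_mul V A A⁻¹ hV2, Matrix.mul_nonsing_inv _ hA, mul_one, hV1]

private lemma myconj_trace {m : ℕ} (V A : Matrix (Fin m) (Fin m) ℝ) (hV2 : star V * V = 1) :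
    (V * A * star V).trace = A.trace := by
  rw [Matrix.trace_mul_cycle, hV2, one_mul]

private lemma myconj_smul_one {m : ℕ} (V : Matrix (Fin m) (Fin m) ℝ) (c : ℝ)
    (hV1 : V * star V = 1) :
    (c • (1 : Matrix (Fin m) (Fin m) ℝ)) = V * (c • (1 : Matrix (Fin m) (Fin m) ℝ)) * star V := by
  rw [Matrix.mul_smul, Matrix.smul_mul, mul_one, hV1]

private lemma scalar_core (m u smin smax s g : ℝ) (hm : 1 ≤ m) (hu : 0 < u) (h0 : 0 < smin)
    (h1 : smin ≤ s) (h2 : s ≤ smax)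
    (hg : g * (smin * m + u) = (m - 1) * smin * u) (hg0 : 0 ≤ g) :
    s ^ 2 / (s + g) - s ^ 2 / (s + u) ≤
      min (smax / (m * smin)) 1 * (s * u / (s + u)) := by
  have hs : 0 < s := h0.trans_le h1
  have hm0 : 0 < m := lt_of_lt_of_le one_pos hm
  have hsg : 0 < s + g := by linarith
  have hsu : 0 < s + u := by linarith
  have hL : s ^ 2 / (s + g) - s ^ 2 / (s + u) = s ^ 2 * (u - g) / ((s + g) * (s + u)) := by
    field_simp; ring
  rw [hL]
  have key : (u - g) * (smin * m + u) = u * (smin + u) := by linear_combination -hg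
  rcases min_cases (smax / (m * smin)) 1 with ⟨hmin, hcase⟩ | ⟨hmin, hcase⟩
  · rw [hmin, div_mul_div_comm, div_le_div_iff₀ (by positivity) (by positivity)]
    have h2' : m * smin * (s * (u - g)) ≤ smax * (u * (s + g)) := by
      rw [← mul_le_mul_iff_of_pos_right (show (0:ℝ) < smin * m + u by positivity)]
      have e1 : m * smin * (s * (u - g)) * (smin * m + u) = m * smin * s * ((u - g) * (smin * m + u)) := by ring
      rw [e1, key]
      have e2 : smax * (u * (s + g)) * (smin * m + u) = smax * u * (s * (smin * m + u) + g * (smin * m + u)) := by ring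
      rw [e2, hg]
      nlinarith [mul_nonneg (sub_nonneg.2 h2) (mul_nonneg (mul_nonneg hu.le hu.le) hs.le),
        mul_nonneg (sub_nonneg.2 (h1.trans h2)) (mul_nonneg (mul_nonneg (mul_nonneg hm0.le hs.le) hu.le) h0.le),
        mul_nonneg (sub_nonneg.2 h2) (mul_nonneg (mul_nonneg (mul_nonneg (by linarith : (0:ℝ) ≤ m - 1) h0.le) hu.le) hu.le),
        mul_nonneg (sub_nonneg.2 h1) (mul_nonneg (mul_nonneg hs.le hu.le) hu.le)]
    nlinarith [mul_le_mul_of_nonneg_left h2' (mul_nonneg hs.le hsu.le)]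
  · rw [hmin, one_mul, div_le_div_iff₀ (by positivity) hsu]
    nlinarith [mul_nonneg (mul_nonneg hs.le hg0) (sq_nonneg (s + u))]

theorem stmt_17 (m : ℕ) (hm : 0 < m) (S : Matrix (Fin m) (Fin m) ℝ) (hS : S.PosDef)
    (τ : ℝ) (hτ : 0 < τ) :
    letI σ : Fin m → ℝ := hS.posSemidef.isHermitian.eigenvalues
    letI σmax : ℝ := ⨆ j, σ j
    letI σmin : ℝ := ⨅ j, σ j
    letI γ : ℝ := ((m : ℝ) - 1) * σmin * τ ^ 2 / (σmin * (m : ℝ) ^ 2 + τ ^ 2)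
    (S ^ 2 * (S + γ • (1 : Matrix (Fin m) (Fin m) ℝ))⁻¹).trace -
        (S ^ 2 * (S + (τ ^ 2 / m) • (1 : Matrix (Fin m) (Fin m) ℝ))⁻¹).trace ≤
      min (σmax / ((m : ℝ) * σmin)) 1 *
        ((S⁻¹ + ((m : ℝ) / τ ^ 2) • (1 : Matrix (Fin m) (Fin m) ℝ))⁻¹).trace := by
  set σ : Fin m → ℝ := hS.posSemidef.isHermitian.eigenvalues with hσ0
  set σmax : ℝ := ⨆ j, σ j with hσmax0
  set σmin : ℝ := ⨅ j, σ j with hσmin0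
  set γ : ℝ := ((m : ℝ) - 1) * σmin * τ ^ 2 / (σmin * (m : ℝ) ^ 2 + τ ^ 2) with hγ1
  haveI : Nonempty (Fin m) := Fin.pos_iff_nonempty.mp hm
  have hA : S.IsHermitian := hS.posSemidef.isHermitian
  have hσdef : σ = hA.eigenvalues := rfl
  have hσpos : ∀ j, 0 < σ j := fun j => hS.eigenvalues_pos j
  have hmin_le : ∀ j, σmin ≤ σ j := fun j => ciInf_le (Set.finite_range σ).bddBelow j
  have hle_max : ∀ j, σ j ≤ σmax := fun j => le_ciSup (Set.finite_range σ).bddAbove j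
  obtain ⟨j0, hj0⟩ := exists_eq_ciInf_of_finite (f := σ)
  have hσmin : 0 < σmin := by rw [hσmin0, ← hj0]; exact hσpos j0
  have hm1 : (1 : ℝ) ≤ (m : ℝ) := by exact_mod_cast hm
  have hmR : (0 : ℝ) < (m : ℝ) := by positivity
  have hγden : (0 : ℝ) < σmin * (m : ℝ) ^ 2 + τ ^ 2 := by positivity
  have hγdef : γ = ((m : ℝ) - 1) * σmin * τ ^ 2 / (σmin * (m : ℝ) ^ 2 + τ ^ 2) := hγ1
  have hγ0 : 0 ≤ γ := by
    rw [hγdef]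
    apply div_nonneg _ hγden.le
    have : (0:ℝ) ≤ (m:ℝ) - 1 := by linarith
    positivity
  set V : Matrix (Fin m) (Fin m) ℝ :=
    (Matrix.IsHermitian.eigenvectorUnitary hA : Matrix (Fin m) (Fin m) ℝ) with hVdef
  have hV1 : V * star V = 1 :=
    (Matrix.mem_unitaryGroup_iff).mp (Matrix.IsHermitian.eigenvectorUnitary hA).2
  have hV2 : star V * V = 1 :=
    (Matrix.mem_unitaryGroup_iff').mp (Matrix.IsHermitian.eigenvectorUnitary hA).2
  have hspec : S = V * diagonal σ * star V := by
    have := hA.spectral_theorem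
    rwa [Unitary.conjStarAlgAut_apply, RCLike.ofReal_real_eq_id, Function.id_comp, ← hσdef, ← hVdef] at this
  -- conjugation of S + c•1
  have hadd : ∀ c : ℝ, S + c • (1 : Matrix (Fin m) (Fin m) ℝ)
      = V * diagonal (fun j => σ j + c) * star V := by
    intro c
    rw [hspec, myconj_smul_one V c hV1, ← Matrix.add_mul, ← Matrix.mul_add,
      Matrix.smul_one_eq_diagonal, Matrix.diagonal_add]
  have hdetdiag : ∀ d : Fin m → ℝ, (∀ j, d j ≠ 0) → IsUnit (diagonal d).det := by
    intro d hd
    rw [Matrix.det_diagonal]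
    exact (Finset.prod_ne_zero_iff.mpr (fun j _ => hd j)).isUnit
  have hinvdiag : ∀ d : Fin m → ℝ, (∀ j, d j ≠ 0) →
      (diagonal d)⁻¹ = diagonal (fun j => (d j)⁻¹) := by
    intro d hd
    apply Matrix.inv_eq_right_inv
    rw [diagonal_mul_diagonal, ← Matrix.diagonal_one]
    have : (fun j => d j * (d j)⁻¹) = fun _ : Fin m => (1:ℝ) :=
      funext fun j => mul_inv_cancel₀ (hd j)
    rw [this]
  have trace1 : ∀ c : ℝ, 0 ≤ c →
      (S ^ 2 * (S + c • (1 : Matrix (Fin m) (Fin m) ℝ))⁻¹).trace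
        = ∑ j, σ j ^ 2 / (σ j + c) := by
    intro c hc
    have hd : ∀ j, σ j + c ≠ 0 := fun j => by have := hσpos j; linarith
    have e1 : S ^ 2 = V * diagonal (fun j => σ j * σ j) * star V := by
      rw [pow_two, hspec, myconj_mul _ _ _ hV2, diagonal_mul_diagonal]
    have e3 : (S + c • (1 : Matrix (Fin m) (Fin m) ℝ))⁻¹
        = V * diagonal (fun j => (σ j + c)⁻¹) * star V := by
      rw [hadd c, myconj_inv _ _ (hdetdiag _ hd) hV1 hV2, hinvdiag _ hd]
    rw [e1, e3, myconj_mul _ _ _ hV2, diagonal_mul_diagonal, myconj_trace _ _ hV2,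
      Matrix.trace_diagonal]
    exact Finset.sum_congr rfl fun j _ => by rw [pow_two, div_eq_mul_inv]
  have trace2 : ((S⁻¹ + ((m : ℝ) / τ ^ 2) • (1 : Matrix (Fin m) (Fin m) ℝ))⁻¹).trace
      = ∑ j, ((σ j)⁻¹ + (m : ℝ) / τ ^ 2)⁻¹ := by
    have hc : (0:ℝ) < (m : ℝ) / τ ^ 2 := by positivity
    have hd : ∀ j, (σ j)⁻¹ + (m : ℝ) / τ ^ 2 ≠ 0 := fun j => by
      have := hσpos j; positivity
    have e1 : S⁻¹ = V * diagonal (fun j => (σ j)⁻¹) * star V := by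
      rw [hspec, myconj_inv _ _ (hdetdiag _ fun j => (hσpos j).ne') hV1 hV2,
        hinvdiag _ fun j => (hσpos j).ne']
    have e2 : S⁻¹ + ((m : ℝ) / τ ^ 2) • (1 : Matrix (Fin m) (Fin m) ℝ)
        = V * diagonal (fun j => (σ j)⁻¹ + (m : ℝ) / τ ^ 2) * star V := by
      rw [e1, myconj_smul_one V _ hV1, ← Matrix.add_mul, ← Matrix.mul_add,
        Matrix.smul_one_eq_diagonal, Matrix.diagonal_add]
    rw [e2, myconj_inv _ _ (hdetdiag _ hd) hV1 hV2, hinvdiag _ hd, myconj_trace _ _ hV2,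
      Matrix.trace_diagonal]
  have hu : (0:ℝ) < τ ^ 2 / m := by positivity
  rw [trace1 γ hγ0, trace1 (τ ^ 2 / m) hu.le, trace2, ← Finset.sum_sub_distrib,
    Finset.mul_sum]
  apply Finset.sum_le_sum
  intro j _
  have hrw : ((σ j)⁻¹ + (m : ℝ) / τ ^ 2)⁻¹ = σ j * (τ ^ 2 / m) / (σ j + τ ^ 2 / m) := by
    have hsj := hσpos j
    rw [eq_div_iff (by positivity)]
    field_simp
    ring
  rw [hrw]
  apply scalar_core (m : ℝ) (τ ^ 2 / m) σmin σmax (σ j) γ hm1 hu hσmin (hmin_le j)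
    (hle_max j) _ hγ0
  rw [hγdef]
  field_simp
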